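/- Let 𝔊 be a finite (q+1)-regular graph. For all u₊ ∈ 𝒟′(𝔓⁺) and u₋ ∈ 𝒟′(𝔓⁻): ⟨u₊, u₋⟩_geod = ⟨u₊, u₋⟩_{(𝔛)} − ⟨u₊, u₋⟩_{(op,𝔈)}, where the modified edge pairing is ⟨u₊,u₋⟩_{(op,𝔈)} = Σ_{e∈𝔈} (π^𝔈₊,*u₊)(e^op)·(π^𝔈₋,*u₋)(e). -/
import Mathlib


open scoped Classical

/-! Framework: one-sided shift spaces of non-backtracking edge chains on a finite
`(q+1)`-regular graph, transfer operators, distributions, and pairings.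

A forward chain `(e₁, e₂, …) ∈ 𝔓⁺` is encoded by its vertex sequence
`c : ℕ → V` with `e_{i+1} = (c i, c (i+1))`; then `π₊(c) = c 0` and the first edge is
`(c 0, c 1)`.  A backward chain `(…, e₂, e₁) ∈ 𝔓⁻` is encoded by the vertex sequence
`c : ℕ → V` read away from its terminal vertex, i.e. `e_i = (c i, c (i-1))`; then
`π₋(c) = c 0` and its last edge is `(c 1, c 0)`. With these conventions both shift
spaces are encoded by the same type of non-backtracking vertex sequences, and both
transfer operators are given by the same formula (extension by one edge at `c 0`). -/

/-- A non-backtracking infinite chain of concatenated edges, as a vertex sequence. -/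
def IsEdgeChain {V : Type} (G : SimpleGraph V) (c : ℕ → V) : Prop :=
  (∀ i, G.Adj (c i) (c (i + 1))) ∧ ∀ i, c (i + 2) ≠ c i

/-- The shift space of non-backtracking chains. -/
abbrev ChainSp {V : Type} (G : SimpleGraph V) : Type := {c : ℕ → V // IsEdgeChain G c}

/-- Extending a chain by a new vertex `v` at the front. -/
def consChain {V : Type} {G : SimpleGraph V} (v : V) (c : ChainSp G)
    (h1 : G.Adj v (c.1 0)) (h2 : c.1 1 ≠ v) : ChainSp G :=
  ⟨fun i => Nat.casesOn i v fun j => c.1 j, by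
    constructor
    · intro i
      cases i with
      | zero => exact h1
      | succ j => exact c.2.1 j
    · intro i
      cases i with
      | zero => exact h2
      | succ j => exact c.2.2 j⟩

/-- The space `C^lc(𝔓)` of locally constant functions: on the compact shift space of a
finite graph these are exactly the functions depending on finitely many initial
coordinates. -/
noncomputable def lcSub {V : Type} (G : SimpleGraph V) : Submodule ℂ (ChainSp G → ℂ) where
  carrier := {F | ∃ n : ℕ, ∀ c c' : ChainSp G, (∀ i < n, c.1 i = c'.1 i) → F c = F c'}
  zero_mem' := ⟨0, fun _ _ _ => rfl⟩
  add_mem' := by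
    rintro F F' ⟨n, hn⟩ ⟨m, hm⟩
    refine ⟨max n m, fun c c' h => ?_⟩
    simp only [Pi.add_apply]
    rw [hn c c' fun i hi => h i (lt_of_lt_of_le hi (le_max_left n m)),
      hm c c' fun i hi => h i (lt_of_lt_of_le hi (le_max_right n m))]
  smul_mem' := by
    rintro a F ⟨n, hn⟩
    refine ⟨n, fun c c' h => ?_⟩
    simp only [Pi.smul_apply]
    rw [hn c c' h]

/-- The transfer operator on functions: `(ℒF)(c) = Σ_{e₀} F(e₀, c)`, summing over all
one-edge extensions of the chain `c` that remain non-backtracking. -/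
noncomputable def transferFun {V : Type} (G : SimpleGraph V) [Fintype V]
    (F : ChainSp G → ℂ) : ChainSp G → ℂ := fun c =>
  ∑ v : V, if h : G.Adj v (c.1 0) ∧ c.1 1 ≠ v then F (consChain v c h.1 h.2) else 0

/-- The transfer operator `ℒ` as a linear endomorphism of `C^lc(𝔓)`. -/
noncomputable def transferLM {V : Type} (G : SimpleGraph V) [Fintype V] :
    lcSub G →ₗ[ℂ] lcSub G where
  toFun F := ⟨transferFun G F.1, by
    obtain ⟨n, hn⟩ := F.2
    refine ⟨n + 2, fun c c' h => ?_⟩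
    have h0 : c.1 0 = c'.1 0 := h 0 (by omega)
    have h1 : c.1 1 = c'.1 1 := h 1 (by omega)
    unfold transferFun
    refine Finset.sum_congr rfl fun v _ => ?_
    by_cases hc : G.Adj v (c.1 0) ∧ c.1 1 ≠ v
    · have hc' : G.Adj v (c'.1 0) ∧ c'.1 1 ≠ v := by rw [← h0, ← h1]; exact hc
      rw [dif_pos hc, dif_pos hc']
      refine hn _ _ fun i hi => ?_
      cases i with
      | zero => rfl
      | succ j => exact h j (by omega)
    · have hc' : ¬(G.Adj v (c'.1 0) ∧ c'.1 1 ≠ v) := by rw [← h0, ← h1]; exact hc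
      rw [dif_neg hc, dif_neg hc']⟩
  map_add' F F' := by
    apply Subtype.ext
    funext c
    simp only [Submodule.coe_add, Pi.add_apply, transferFun]
    rw [← Finset.sum_add_distrib]
    refine Finset.sum_congr rfl fun v _ => ?_
    by_cases hc : G.Adj v (c.1 0) ∧ c.1 1 ≠ v
    · rw [dif_pos hc, dif_pos hc, dif_pos hc]
    · rw [dif_neg hc, dif_neg hc, dif_neg hc]; ring
  map_smul' a F := by
    apply Subtype.ext
    funext c
    simp only [Submodule.coe_smul, Pi.smul_apply, transferFun, RingHom.id_apply,
      Finset.smul_sum]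
    refine Finset.sum_congr rfl fun v _ => ?_
    by_cases hc : G.Adj v (c.1 0) ∧ c.1 1 ≠ v
    · rw [dif_pos hc, dif_pos hc]
    · rw [dif_neg hc, dif_neg hc]; simp

/-- The space of distributions `𝒟′(𝔓)`: the algebraic dual of `C^lc(𝔓)`. -/
abbrev DistSp {V : Type} (G : SimpleGraph V) : Type := lcSub G →ₗ[ℂ] ℂ

/-- The dual transfer operator `ℒ′` on distributions. -/
noncomputable def dualTransfer {V : Type} (G : SimpleGraph V) [Fintype V]
    (u : DistSp G) : DistSp G := (u : lcSub G →ₗ[ℂ] ℂ).comp (transferLM G)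

/-- Indicator (in `C^lc`) of chains with base vertex `x`. -/
noncomputable def vtxInd {V : Type} (G : SimpleGraph V) (x : V) : lcSub G :=
  ⟨fun c => if c.1 0 = x then 1 else 0,
    ⟨1, fun c c' h => by simp only [h 0 Nat.one_pos]⟩⟩

/-- The pushforward `π±,*u : 𝔛 → ℂ`, `x ↦ ⟨u, 𝟙_{π±⁻¹(x)}⟩`. -/
noncomputable def pushVtx {V : Type} (G : SimpleGraph V) (u : DistSp G) (x : V) : ℂ :=
  u (vtxInd G x)

/-- Indicator of forward chains whose first edge is `(a, b)`. -/
noncomputable def edgeIndP {V : Type} (G : SimpleGraph V) (a b : V) : lcSub G :=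
  ⟨fun c => if c.1 0 = a ∧ c.1 1 = b then 1 else 0,
    ⟨2, fun c c' h => by simp only [h 0 (by omega : (0:ℕ) < 2), h 1 (by omega : (1:ℕ) < 2)]⟩⟩

/-- Indicator of backward chains whose last edge is `(a, b)` (so `c 1 = a`, `c 0 = b`). -/
noncomputable def edgeIndM {V : Type} (G : SimpleGraph V) (a b : V) : lcSub G :=
  ⟨fun c => if c.1 1 = a ∧ c.1 0 = b then 1 else 0,
    ⟨2, fun c c' h => by simp only [h 0 (by omega : (0:ℕ) < 2), h 1 (by omega : (1:ℕ) < 2)]⟩⟩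

/-- The vertex pairing `⟨u₊, u₋⟩_(𝔛) = Σ_{x∈𝔛} (π₊,*u₊)(x)·(π₋,*u₋)(x)`. -/
noncomputable def vertexPairing {V : Type} (G : SimpleGraph V) [Fintype V]
    (up um : DistSp G) : ℂ :=
  ∑ x : V, pushVtx G up x * pushVtx G um x

/-- The modified edge pairing `⟨u₊,u₋⟩_(op,𝔈) = Σ_{e∈𝔈} (π^𝔈₊,*u₊)(e^op)·(π^𝔈₋,*u₋)(e)`,
the sum running over the oriented edges `e = (a, b)` of `𝔊`. -/
noncomputable def modEdgePairing {V : Type} (G : SimpleGraph V) [Fintype V]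
    (up um : DistSp G) : ℂ :=
  ∑ e : {p : V × V // G.Adj p.1 p.2},
    up (edgeIndP G e.1.2 e.1.1) * um (edgeIndM G e.1.1 e.1.2)

/-- For a fixed forward chain `c₊`, the locally constant function
`c₋ ↦ 𝟙_𝔓(c₋, c₊)` on `𝔓⁻`: the pair `(c₋, c₊)` joins to a bi-infinite
non-backtracking chain iff the base vertices agree and the adjacent edges do not
backtrack. -/
noncomputable def geodInner {V : Type} (G : SimpleGraph V) (cp : ChainSp G) : lcSub G :=
  ⟨fun cm => if cm.1 0 = cp.1 0 ∧ cm.1 1 ≠ cp.1 1 then 1 else 0,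
    ⟨2, fun c c' h => by simp only [h 0 (by omega : (0:ℕ) < 2), h 1 (by omega : (1:ℕ) < 2)]⟩⟩

/-- For a fixed forward chain `c₊`, `c₋ ↦ 𝟙_{𝔓^(2)}(c₋, c₊)` (matching base vertex). -/
noncomputable def sqInner {V : Type} (G : SimpleGraph V) (cp : ChainSp G) : lcSub G :=
  ⟨fun cm => if cm.1 0 = cp.1 0 then 1 else 0,
    ⟨1, fun c c' h => by simp only [h 0 (by omega : (0:ℕ) < 1)]⟩⟩

/-- The geodesic pairing `⟨u₊, u₋⟩_geod = ⟨u₊ ⊗ u₋, 𝟙_𝔓⟩`, computed as the iterated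
evaluation `⟨u₊, c₊ ↦ ⟨u₋, 𝟙_𝔓(·, c₊)⟩⟩`. -/
noncomputable def geodPairing {V : Type} (G : SimpleGraph V)
    (up um : DistSp G) : ℂ :=
  up ⟨fun cp => um (geodInner G cp),
    ⟨2, fun c c' h => by
      refine congrArg um (Subtype.ext (funext fun cm => ?_))
      show (if cm.1 0 = c.1 0 ∧ cm.1 1 ≠ c.1 1 then (1:ℂ) else 0)
          = if cm.1 0 = c'.1 0 ∧ cm.1 1 ≠ c'.1 1 then 1 else 0
      rw [h 0 (by omega), h 1 (by omega)]⟩⟩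

/-- The pairing `⟨u₊ ⊗ u₋, 𝟙_{𝔓^(2)}⟩` over pairs of chains with common base vertex. -/
noncomputable def sqPairing {V : Type} (G : SimpleGraph V)
    (up um : DistSp G) : ℂ :=
  up ⟨fun cp => um (sqInner G cp),
    ⟨1, fun c c' h => by
      refine congrArg um (Subtype.ext (funext fun cm => ?_))
      show (if cm.1 0 = c.1 0 then (1:ℂ) else 0) = if cm.1 0 = c'.1 0 then 1 else 0
      rw [h 0 (by omega)]⟩⟩

/-- `⟨u₊, u₋⟩_geod = ⟨u₊, u₋⟩_(𝔛) − ⟨u₊, u₋⟩_(op,𝔈)` for all distributions. -/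
theorem geodesic_pairing_eq_vertex_sub_edge
    (q : ℕ) (V : Type) [Fintype V] (G : SimpleGraph V) (hconn : G.Connected)
    (hreg : G.IsRegularOfDegree (q + 1))
    (up um : DistSp G) :
    geodPairing G up um = vertexPairing G up um - modEdgePairing G up um := by
  classical
  have hcong : ∀ (F₁ F₂ : lcSub G), F₁.1 = F₂.1 → up F₁ = up F₂ := fun F₁ F₂ h =>
    congrArg up (Subtype.ext h)
  have key : geodPairing G up um =
      up ((∑ x : V, um (vtxInd G x) • vtxInd G x) -
        ∑ e : {p : V × V // G.Adj p.1 p.2},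
          um (edgeIndM G e.1.1 e.1.2) • edgeIndP G e.1.2 e.1.1) := by
    apply hcong
    funext cp
    have hval : um (geodInner G cp) =
        um (vtxInd G (cp.1 0)) - um (edgeIndM G (cp.1 1) (cp.1 0)) := by
      have : geodInner G cp = vtxInd G (cp.1 0) - edgeIndM G (cp.1 1) (cp.1 0) := by
        apply Subtype.ext
        funext cm
        show (if cm.1 0 = cp.1 0 ∧ cm.1 1 ≠ cp.1 1 then (1:ℂ) else 0) =
          (if cm.1 0 = cp.1 0 then (1:ℂ) else 0) -
            (if cm.1 1 = cp.1 1 ∧ cm.1 0 = cp.1 0 then (1:ℂ) else 0)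
        by_cases h0 : cm.1 0 = cp.1 0 <;> by_cases h1 : cm.1 1 = cp.1 1 <;>
          simp [h0, h1]
      rw [this, map_sub]
    show um (geodInner G cp) = _
    rw [hval]
    have hsubval : ∀ (a : lcSub G) (c : ChainSp G), ((a : ChainSp G → ℂ)) c = a.1 c :=
      fun _ _ => rfl
    have hcoe : ((((∑ x : V, um (vtxInd G x) • vtxInd G x) -
        ∑ e : {p : V × V // G.Adj p.1 p.2},
          um (edgeIndM G e.1.1 e.1.2) • edgeIndP G e.1.2 e.1.1 : lcSub G) :
        ChainSp G → ℂ)) cp =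
        (∑ x : V, um (vtxInd G x) * (if cp.1 0 = x then 1 else 0)) -
        ∑ e : {p : V × V // G.Adj p.1 p.2},
          um (edgeIndM G e.1.1 e.1.2) *
            (if cp.1 0 = e.1.2 ∧ cp.1 1 = e.1.1 then 1 else 0) := by
      rw [Submodule.coe_sub]
      simp only [Pi.sub_apply]
      congr 1
      · rw [Submodule.coe_sum]
        simp only [Finset.sum_apply, Submodule.coe_smul, Pi.smul_apply, smul_eq_mul]
        rfl
      · rw [Submodule.coe_sum]
        simp only [Finset.sum_apply, Submodule.coe_smul, Pi.smul_apply, smul_eq_mul]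
        rfl
    rw [hcoe]
    congr 1
    · simp [mul_ite, Finset.sum_ite_eq]
    · have hadj : G.Adj (cp.1 1) (cp.1 0) := (cp.2.1 0).symm
      rw [Finset.sum_eq_single (⟨(cp.1 1, cp.1 0), hadj⟩ :
          {p : V × V // G.Adj p.1 p.2})]
      · simp
      · rintro ⟨⟨a, b⟩, hab⟩ _ hne
        simp only [mul_eq_zero]
        by_cases hc : cp.1 0 = b ∧ cp.1 1 = a
        · exact absurd (Subtype.ext (Prod.ext hc.2.symm hc.1.symm)) hne
        · right; rw [if_neg hc]
      · intro h; exact absurd (Finset.mem_univ _) h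
  rw [key, map_sub, map_sum, map_sum]
  simp only [map_smul, smul_eq_mul]
  unfold vertexPairing modEdgePairing pushVtx
  congr 1
  · exact Finset.sum_congr rfl fun x _ => mul_comm _ _
  · exact Finset.sum_congr rfl fun e _ => mul_comm _ _
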